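/- For any normalized Bessel sequence {g_n}_{n≥0} in a Hilbert space H there exists a sequence {e_n}_{n≥0} of unit vectors such that g_0 = e_0 and g_n = e_n - ∑_{i=0}^{n-1} ⟨e_n, e_i⟩ g_i for all n ≥ 1. -/

import Mathlib

open scoped ComplexInnerProductSpace

set_option maxHeartbeats 1000000
noncomputable section
variable {H : Type*} [NormedAddCommGroup H] [InnerProductSpace ℂ H]

def kacT (v : H) : H →L[ℂ] H :=
  ContinuousLinearMap.id ℂ H - (innerSL ℂ v).smulRight v

lemma kacT_apply (v x : H) : kacT v x = x - ⟪v, x⟫ • v := rfl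

lemma kacT_self (v : H) (hv : ‖v‖ = 1) : kacT v v = 0 := by
  rw [kacT_apply, inner_self_eq_norm_sq_to_K, hv]
  simp

lemma kacT_adj (v x y : H) : ⟪kacT v x, y⟫ = ⟪x, kacT v y⟫ := by
  simp only [kacT_apply, inner_sub_left, inner_sub_right, inner_smul_left, inner_smul_right]
  rw [← inner_conj_symm x v]
  ring

lemma kacT_norm_sq (v : H) (hv : ‖v‖ = 1) (x : H) :
    ‖kacT v x‖ ^ 2 = ‖x‖ ^ 2 - ‖⟪v, x⟫‖ ^ 2 := by
  have h := @norm_sub_sq ℂ _ _ _ _ x (⟪v, x⟫ • v)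
  rw [kacT_apply, h]
  have h1 : ‖⟪v, x⟫ • v‖ = ‖⟪v, x⟫‖ := by rw [norm_smul, hv, mul_one]
  have h2 : (RCLike.re (⟪x, ⟪v, x⟫ • v⟫ : ℂ) : ℝ) = ‖⟪v, x⟫‖ ^ 2 := by
    rw [inner_smul_right, ← inner_conj_symm v x]
    rw [Complex.conj_mul']
    rw [← inner_conj_symm x v]
    simp [← Complex.ofReal_pow, Complex.conj_conj, RCLike.norm_conj]
    rw [← inner_conj_symm x v]
    exact Complex.norm_conj _
  rw [h1, h2]; ring

def kacR (f : ℕ → H) : ℕ → H →L[ℂ] H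
  | 0 => ContinuousLinearMap.id ℂ H
  | (n+1) => (kacT (f n)).comp (kacR f n)

def kacS (f : ℕ → H) : ℕ → H →L[ℂ] H
  | 0 => ContinuousLinearMap.id ℂ H
  | (n+1) => (kacS f n).comp (kacT (f n))

@[simp] lemma kacR_zero (f : ℕ → H) : kacR f 0 = ContinuousLinearMap.id ℂ H := rfl
@[simp] lemma kacS_zero (f : ℕ → H) : kacS f 0 = ContinuousLinearMap.id ℂ H := rfl
lemma kacR_succ (f : ℕ → H) (n : ℕ) (x : H) :
    kacR f (n+1) x = kacT (f n) (kacR f n x) := rfl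
lemma kacS_succ (f : ℕ → H) (n : ℕ) (x : H) :
    kacS f (n+1) x = kacS f n (kacT (f n) x) := rfl

lemma kacS_adj (f : ℕ → H) (n : ℕ) : ∀ x y : H, ⟪kacS f n x, y⟫ = ⟪x, kacR f n y⟫ := by
  induction n with
  | zero => intro x y; rfl
  | succ n ih =>
    intro x y
    rw [kacS_succ, kacR_succ, ih, kacT_adj]

lemma kacS_congr (f f' : ℕ → H) (n : ℕ) (h : ∀ i < n, f i = f' i) :
    kacS f n = kacS f' n := by
  induction n with
  | zero => rfl
  | succ n ih =>
    show (kacS f n).comp (kacT (f n)) = (kacS f' n).comp (kacT (f' n))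
    rw [ih (fun i hi => h i (Nat.lt_succ_of_lt hi)), h n (Nat.lt_succ_self n)]

lemma kacS_eq_id_sub (f g : ℕ → H) (n : ℕ) (hf2 : ∀ i < n, g i = kacS f i (f i)) (x : H) :
    kacS f n x = x - ∑ i ∈ Finset.range n, ⟪f i, x⟫ • g i := by
  induction n with
  | zero => simp
  | succ n ih =>
    rw [kacS_succ, kacT_apply, map_sub, map_smul,
      ih (fun i hi => hf2 i (Nat.lt_succ_of_lt hi)),
      ← hf2 n (Nat.lt_succ_self n), Finset.sum_range_succ]
    abel

lemma kacR_norm_sq (f g : ℕ → H) (n : ℕ) (hf1 : ∀ i < n, ‖f i‖ = 1)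
    (hf2 : ∀ i < n, g i = kacS f i (f i)) (x : H) :
    ‖kacR f n x‖ ^ 2 = ‖x‖ ^ 2 - ∑ i ∈ Finset.range n, ‖⟪g i, x⟫‖ ^ 2 := by
  induction n with
  | zero => simp
  | succ n ih =>
    have hgx : ⟪g n, x⟫ = ⟪f n, kacR f n x⟫ := by
      rw [hf2 n (Nat.lt_succ_self n), kacS_adj]
    rw [kacR_succ, kacT_norm_sq (f n) (hf1 n (Nat.lt_succ_self n)),
      ih (fun i hi => hf1 i (Nat.lt_succ_of_lt hi)) (fun i hi => hf2 i (Nat.lt_succ_of_lt hi)),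
      Finset.sum_range_succ, ← hgx]
    ring

lemma kacR_f0 (f : ℕ → H) (h0 : ‖f 0‖ = 1) (n : ℕ) (hn : 0 < n) : kacR f n (f 0) = 0 := by
  induction n with
  | zero => exact absurd hn (lt_irrefl 0)
  | succ n ih =>
    rcases Nat.eq_zero_or_pos n with h | h
    · subst h
      rw [kacR_succ]
      exact kacT_self (f 0) h0
    · rw [kacR_succ, ih h, map_zero]

lemma kac_exists_next (g : ℕ → H)
    (hbessel : ∀ x : H, ∀ s : Finset ℕ, ∑ n ∈ s, ‖⟪g n, x⟫‖ ^ 2 ≤ ‖x‖ ^ 2)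
    (f : ℕ → H) (n : ℕ) (hn : 0 < n)
    (hf1 : ∀ i < n, ‖f i‖ = 1) (hf2 : ∀ i < n, g i = kacS f i (f i)) :
    ∃ v : H, ‖v‖ = 1 ∧ g n = kacS f n v := by
  classical
  -- key inequality
  have hkey : ∀ x : H, ‖⟪g n, x⟫‖ ≤ ‖kacR f n x‖ := by
    intro x
    have hb := hbessel x (Finset.range (n+1))
    rw [Finset.sum_range_succ] at hb
    have h2 : ‖⟪g n, x⟫‖ ^ 2 ≤ ‖kacR f n x‖ ^ 2 := by
      rw [kacR_norm_sq f g n hf1 hf2 x]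
      linarith
    nlinarith [h2, norm_nonneg (⟪g n, x⟫ : ℂ), norm_nonneg (kacR f n x)]
  -- the finite-dimensional subspace
  set sV : Set H := (f '' Set.Iio n) ∪ (g '' Set.Iic n) with hsV
  have hsVfin : sV.Finite := by
    apply Set.Finite.union <;> apply Set.Finite.image
    · exact Set.finite_Iio n
    · exact Set.finite_Iic n
  set V : Submodule ℂ H := Submodule.span ℂ sV with hV
  haveI : FiniteDimensional ℂ V := FiniteDimensional.span_of_finite ℂ hsVfin
  have hfV : ∀ i < n, f i ∈ V := fun i hi =>
    Submodule.subset_span (Or.inl ⟨i, hi, rfl⟩)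
  have hgV : ∀ i ≤ n, g i ∈ V := fun i hi =>
    Submodule.subset_span (Or.inr ⟨i, hi, rfl⟩)
  have hSV : ∀ x ∈ V, kacS f n x ∈ V := by
    intro x hx
    rw [kacS_eq_id_sub f g n hf2 x]
    exact Submodule.sub_mem V hx (Submodule.sum_mem V (fun i hi =>
      Submodule.smul_mem V _ (hgV i (le_of_lt (Finset.mem_range.mp hi)))))
  have hRV : ∀ m ≤ n, ∀ x ∈ V, kacR f m x ∈ V := by
    intro m hm
    induction m with
    | zero => intro x hx; exact hx
    | succ m ih =>
      intro x hx
      rw [kacR_succ, kacT_apply]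
      exact Submodule.sub_mem V (ih (le_of_lt hm) x hx)
        (Submodule.smul_mem V _ (hfV m hm))
  set A : V →ₗ[ℂ] V := ((kacS f n : H →ₗ[ℂ] H)).restrict hSV with hA
  set B : V →ₗ[ℂ] V := ((kacR f n : H →ₗ[ℂ] H)).restrict (fun x hx => hRV n le_rfl x hx) with hB
  have hAcoe : ∀ x : V, (A x : H) = kacS f n (x : H) := fun x => rfl
  have hBcoe : ∀ x : V, (B x : H) = kacR f n (x : H) := fun x => rfl
  have hadj : A = LinearMap.adjoint B := by
    rw [LinearMap.eq_adjoint_iff]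
    intro x y
    rw [Submodule.coe_inner, Submodule.coe_inner, hAcoe, hBcoe]
    exact kacS_adj f n (x : H) (y : H)
  have hadj' : B = LinearMap.adjoint A := by
    rw [hadj, LinearMap.adjoint_adjoint]
  -- range A = (ker B)ᗮ
  have horthA : (LinearMap.range A)ᗮ = LinearMap.ker B := by
    ext x
    rw [Submodule.mem_orthogonal, LinearMap.mem_ker]
    constructor
    · intro hx
      have h1 : ⟪B x, B x⟫ = 0 := by
        have h2 := hx (A (B x)) ⟨B x, rfl⟩
        rw [hadj, LinearMap.adjoint_inner_left] at h2
        exact h2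
      exact inner_self_eq_zero.mp h1
    · intro hx v hv
      obtain ⟨y, rfl⟩ := hv
      rw [hadj, LinearMap.adjoint_inner_left, hx, inner_zero_right]
  have hrangeA : LinearMap.range A = (LinearMap.ker B)ᗮ := by
    rw [← horthA, Submodule.orthogonal_orthogonal]
  have horthB : (LinearMap.range B)ᗮ = LinearMap.ker A := by
    ext x
    rw [Submodule.mem_orthogonal, LinearMap.mem_ker]
    constructor
    · intro hx
      have h1 : ⟪A x, A x⟫ = 0 := by
        have h2 := hx (B (A x)) ⟨A x, rfl⟩
        rw [hadj', LinearMap.adjoint_inner_left] at h2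
        exact h2
      exact inner_self_eq_zero.mp h1
    · intro hx v hv
      obtain ⟨y, rfl⟩ := hv
      rw [hadj', LinearMap.adjoint_inner_left, hx, inner_zero_right]
  have hrangeB : LinearMap.range B = (LinearMap.ker A)ᗮ := by
    rw [← horthB, Submodule.orthogonal_orthogonal]
  set gn' : V := ⟨g n, hgV n le_rfl⟩ with hgn'
  have hgn'mem : gn' ∈ LinearMap.range A := by
    rw [hrangeA, Submodule.mem_orthogonal]
    intro x hx
    rw [LinearMap.mem_ker] at hx
    have hRx : kacR f n (x : H) = 0 := by
      rw [← hBcoe x, hx]; rfl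
    have h0 : ‖⟪g n, (x : H)⟫‖ ≤ 0 := by
      have := hkey (x : H)
      rw [hRx, norm_zero] at this
      exact this
    have h1 : ⟪g n, (x : H)⟫ = 0 := norm_le_zero_iff.mp h0
    rw [Submodule.coe_inner]
    rw [← inner_conj_symm, hgn']
    show (starRingEnd ℂ) ⟪g n, (x : H)⟫ = 0
    rw [h1, map_zero]
  obtain ⟨h₀, hh₀⟩ := hgn'mem
  set P : Submodule ℂ V := (LinearMap.ker A)ᗮ with hP
  set h : V := (Submodule.orthogonalProjection P h₀ : V) with hh
  have hhP : h ∈ P := (Submodule.orthogonalProjection P h₀).2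
  have hker : h₀ - h ∈ LinearMap.ker A := by
    have : h₀ - (Submodule.orthogonalProjection P h₀ : V) ∈ Pᗮ :=
      Submodule.sub_starProjection_mem_orthogonal (K := P) h₀
    rw [← hh] at this
    rw [hP] at this
    rwa [Submodule.orthogonal_orthogonal] at this
  have hAh : A h = gn' := by
    have h1 : A (h₀ - h) = 0 := hker
    rw [map_sub] at h1
    have := sub_eq_zero.mp h1
    rw [← hh₀, ← this]
  -- h is in range B
  obtain ⟨y, hy⟩ : h ∈ LinearMap.range B := by rw [hrangeB]; exact hhP
  -- norm bound
  have hnormh : ‖h‖ ≤ 1 := by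
    have h1 : (⟪h, B y⟫ : ℂ) = ⟪g n, (y : H)⟫ := by
      rw [hadj', LinearMap.adjoint_inner_right, hAh, Submodule.coe_inner]
    rw [hy] at h1
    have h2 : (‖h‖ ^ 2 : ℝ) = ‖⟪g n, (y : H)⟫‖ := by
      rw [← h1, inner_self_eq_norm_sq_to_K]
      simp
    have h3 : ‖⟪g n, (y : H)⟫‖ ≤ ‖kacR f n (y : H)‖ := hkey _
    have h4 : kacR f n (y : H) = (h : H) := by rw [← hBcoe y, hy]
    have h5 : ‖(h : H)‖ = ‖h‖ := rfl
    rw [h4, h5] at h3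
    nlinarith [norm_nonneg h]
  -- the kernel of A is nontrivial
  have hf0V : f 0 ∈ V := hfV 0 hn
  have hf0 : ‖f 0‖ = 1 := hf1 0 hn
  have hkerB_ne : LinearMap.ker B ≠ ⊥ := by
    intro hbot
    have h1 : (⟨f 0, hf0V⟩ : V) ∈ LinearMap.ker B := by
      rw [LinearMap.mem_ker]
      apply Subtype.ext
      rw [hBcoe]
      exact kacR_f0 f hf0 n hn
    rw [hbot, Submodule.mem_bot] at h1
    have h2 : f 0 = 0 := congrArg Subtype.val h1
    rw [h2, norm_zero] at hf0
    exact zero_ne_one hf0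
  have hkerA_ne : LinearMap.ker A ≠ ⊥ := by
    intro hbot
    have e1 := LinearMap.finrank_range_add_finrank_ker A
    have e2 := LinearMap.finrank_range_add_finrank_ker B
    have e3 := Submodule.finrank_add_finrank_orthogonal (K := LinearMap.ker B)
    have e4 := Submodule.finrank_add_finrank_orthogonal (K := LinearMap.range B)
    rw [horthB] at e4
    rw [hrangeA] at e1
    have hAk : Module.finrank ℂ (LinearMap.ker A) = 0 := by
      rw [hbot]; exact finrank_bot ℂ V
    have hBk : Module.finrank ℂ (LinearMap.ker B) ≠ 0 := by
      intro h0
      exact hkerB_ne (Submodule.finrank_eq_zero.mp h0)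
    omega
  obtain ⟨w', hw'mem, hw'ne⟩ := Submodule.exists_mem_ne_zero_of_ne_bot hkerA_ne
  set w : V := ((‖w'‖ : ℂ))⁻¹ • w' with hw
  have hwnorm : ‖w‖ = 1 := by
    rw [hw, norm_smul, norm_inv, Complex.norm_real, Real.norm_eq_abs, abs_norm]
    exact inv_mul_cancel₀ (norm_ne_zero_iff.mpr hw'ne)
  have hwker : w ∈ LinearMap.ker A := Submodule.smul_mem _ _ hw'mem
  have hhw : (⟪(h : H), (w : H)⟫ : ℂ) = 0 := by
    have h1 : (⟪w, h⟫ : ℂ) = 0 := (Submodule.mem_orthogonal _ _).mp hhP w hwker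
    rw [Submodule.coe_inner] at h1
    rw [← inner_conj_symm, h1, map_zero]
  have hhone : 1 - ‖h‖ ^ 2 ≥ 0 := by nlinarith [norm_nonneg h]
  set s : ℝ := Real.sqrt (1 - ‖h‖ ^ 2) with hs
  have hs2 : s ^ 2 = 1 - ‖h‖ ^ 2 := Real.sq_sqrt hhone
  refine ⟨(h : H) + (s : ℂ) • (w : H), ?_, ?_⟩
  · have hv2 : ‖(h : H) + (s : ℂ) • (w : H)‖ ^ 2 = 1 := by
      rw [@norm_add_sq ℂ]
      have h1 : (⟪(h : H), (s : ℂ) • (w : H)⟫ : ℂ) = 0 := by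
        rw [inner_smul_right, hhw, mul_zero]
      rw [h1]
      have h2 : ‖(s : ℂ) • (w : H)‖ = s := by
        rw [norm_smul, Complex.norm_real, Real.norm_eq_abs,
          abs_of_nonneg (Real.sqrt_nonneg _)]
        have : ‖(w : H)‖ = 1 := hwnorm
        rw [this, mul_one]
      rw [h2]
      have h3 : ‖(h : H)‖ = ‖h‖ := rfl
      rw [h3, hs2]
      simp
    rw [← Real.sqrt_sq (norm_nonneg _), hv2, Real.sqrt_one]
  · rw [map_add, map_smul]
    have h1 : kacS f n (h : H) = g n := by
      rw [← hAcoe h, hAh]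
    have h2 : kacS f n (w : H) = 0 := by
      rw [← hAcoe w]
      have : A w = 0 := hwker
      rw [this]; rfl
    rw [h1, h2, smul_zero, add_zero]

open Classical in
def kacStep (g : ℕ → H) (n : ℕ) (f : ℕ → H) : H :=
  if hex : ∃ v : H, ‖v‖ = 1 ∧ g n = kacS f n v then hex.choose else 0

def kacPrefix (g : ℕ → H) : ℕ → (ℕ → H)
  | 0 => fun _ => 0
  | (n+1) => Function.update (kacPrefix g n) n (kacStep g n (kacPrefix g n))

def kacE (g : ℕ → H) : ℕ → H := fun n => kacPrefix g (n+1) n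

lemma kacPrefix_agree (g : ℕ → H) : ∀ n i, i < n → kacPrefix g n i = kacE g i := by
  intro n
  induction n with
  | zero => intro i hi; exact absurd hi (Nat.not_lt_zero i)
  | succ n ih =>
    intro i hi
    rcases Nat.lt_succ_iff_lt_or_eq.mp hi with h | h
    · show Function.update (kacPrefix g n) n (kacStep g n (kacPrefix g n)) i = kacE g i
      rw [Function.update_of_ne (Nat.ne_of_lt h), ih i h]
    · subst h; rfl

lemma kacE_eq (g : ℕ → H) (n : ℕ) : kacE g n = kacStep g n (kacPrefix g n) := by
  show Function.update (kacPrefix g n) n (kacStep g n (kacPrefix g n)) n = _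
  rw [Function.update_self]

lemma kacE_spec (g : ℕ → H)
    (hbessel : ∀ x : H, ∀ s : Finset ℕ, ∑ n ∈ s, ‖⟪g n, x⟫‖ ^ 2 ≤ ‖x‖ ^ 2)
    (hnorm : ‖g 0‖ = 1) :
    ∀ n, ‖kacE g n‖ = 1 ∧ g n = kacS (kacE g) n (kacE g n) := by
  intro n
  induction n using Nat.strong_induction_on with
  | _ n ih =>
    set f := kacPrefix g n with hf
    have hagree : ∀ i < n, f i = kacE g i := fun i hi => kacPrefix_agree g n i hi
    have hScongr : ∀ m ≤ n, kacS f m = kacS (kacE g) m := fun m hm =>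
      kacS_congr f (kacE g) m (fun i hi => hagree i (lt_of_lt_of_le hi hm))
    have hex : ∃ v : H, ‖v‖ = 1 ∧ g n = kacS f n v := by
      rcases Nat.eq_zero_or_pos n with h | h
      · subst h
        exact ⟨g 0, hnorm, rfl⟩
      · apply kac_exists_next g hbessel f n h
        · intro i hi
          rw [hagree i hi]
          exact (ih i hi).1
        · intro i hi
          rw [hagree i hi, hScongr i (le_of_lt hi)]
          exact (ih i hi).2
    have heq : kacE g n = hex.choose := by
      rw [kacE_eq, kacStep]
      exact dif_pos hex
    constructor
    · rw [heq]; exact hex.choose_spec.1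
    · rw [heq, ← hScongr n le_rfl]; exact hex.choose_spec.2

end

theorem normalized_bessel_from_kaczmarz
    {H : Type*} [NormedAddCommGroup H] [InnerProductSpace ℂ H] [CompleteSpace H]
    (g : ℕ → H)
    (hbessel : ∀ x : H, ∀ s : Finset ℕ, ∑ n ∈ s, ‖⟪g n, x⟫‖ ^ 2 ≤ ‖x‖ ^ 2)
    (hnorm : ‖g 0‖ = 1) :
    ∃ e : ℕ → H, (∀ n, ‖e n‖ = 1) ∧ g 0 = e 0 ∧
      ∀ n, 0 < n → g n = e n - ∑ i ∈ Finset.range n, ⟪e i, e n⟫ • g i := by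
  have hspec := kacE_spec g hbessel hnorm
  refine ⟨kacE g, fun n => (hspec n).1, ?_, ?_⟩
  · have := (hspec 0).2
    simpa using this
  · intro n hn
    have h2 := (hspec n).2
    rw [kacS_eq_id_sub (kacE g) g n (fun i hi => (hspec i).2)] at h2
    exact h2
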